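/- Let A be a symmetric real n×n matrix with eigenvalues λ₁ ≥ … ≥ λₙ, ρ = λ₁ − λₙ, and β ≥ 2(1+γ)ρn for some γ > 0. Then for every z ∈ ℝⁿ with ‖z‖₂ = 1 satisfying |z_k² − 1/n| ≤ 1/(2n) for all k, and every v ∈ ℝⁿ with ‖v‖₂ = 1 and vᵀz = 0, the Riemannian Hessian quadratic form satisfies H_f(z)[v] = vᵀAv − zᵀAz + 6β Σₖ z_k² v_k² − 2β Σₖ z_k⁴ ≥ γρ. -/

import Mathlib

open Matrix Finset

lemma quad_repr' {n : ℕ} (A : Matrix (Fin n) (Fin n) ℝ) (hA : A.IsHermitian)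
    (x : Fin n → ℝ) :
    x ⬝ᵥ A.mulVec x = ∑ j, hA.eigenvalues j * ((star (hA.eigenvectorUnitary : Matrix (Fin n) (Fin n) ℝ) *ᵥ x) j)^2 := by
  set U : Matrix (Fin n) (Fin n) ℝ := (hA.eigenvectorUnitary : Matrix (Fin n) (Fin n) ℝ) with hUdef
  have hdec : A = U * diagonal (RCLike.ofReal ∘ hA.eigenvalues) * star U := hA.spectral_theorem
  conv_lhs => rw [hdec]
  rw [← mulVec_mulVec, ← mulVec_mulVec, dotProduct_mulVec]
  have hv : x ᵥ* U = star U *ᵥ x := by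
    ext j
    simp [vecMul, mulVec, dotProduct, star_eq_conjTranspose, conjTranspose_apply, mul_comm]
  rw [hv]
  simp [dotProduct, mulVec_diagonal, mul_comm, sq]
  exact Finset.sum_congr rfl fun j _ => by ring

lemma quad_norm' {n : ℕ} (A : Matrix (Fin n) (Fin n) ℝ) (hA : A.IsHermitian)
    (x : Fin n → ℝ) :
    ∑ j, ((star (hA.eigenvectorUnitary : Matrix (Fin n) (Fin n) ℝ) *ᵥ x) j)^2 = ∑ k, x k ^ 2 := by
  set U : Matrix (Fin n) (Fin n) ℝ := (hA.eigenvectorUnitary : Matrix (Fin n) (Fin n) ℝ) with hUdef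
  have hUU : U * star U = 1 := by
    have := hA.eigenvectorUnitary.prop
    rw [Unitary.mem_iff] at this
    exact this.2
  have h1 : ∑ j, ((star U *ᵥ x) j)^2 = (star U *ᵥ x) ⬝ᵥ (star U *ᵥ x) := by
    simp [dotProduct, sq]
  have hv : x ᵥ* U = star U *ᵥ x := by
    ext j
    simp [vecMul, mulVec, dotProduct, star_eq_conjTranspose, conjTranspose_apply, mul_comm]
  rw [h1]
  conv_lhs => rw [← hv, ← dotProduct_mulVec, hv, mulVec_mulVec, hUU, one_mulVec]
  simp [dotProduct, sq]

lemma quad_bounds' {n : ℕ} [NeZero n] (A : Matrix (Fin n) (Fin n) ℝ) (hA : A.IsHermitian)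
    (x : Fin n → ℝ) (hx : ∑ k, x k ^ 2 = 1) :
    (⨅ i, hA.eigenvalues i) ≤ x ⬝ᵥ A.mulVec x ∧ x ⬝ᵥ A.mulVec x ≤ ⨆ i, hA.eigenvalues i := by
  have hrep := quad_repr' A hA x
  have hnrm := quad_norm' A hA x
  rw [hx] at hnrm
  set y := (star (hA.eigenvectorUnitary : Matrix (Fin n) (Fin n) ℝ) *ᵥ x)
  constructor
  · rw [hrep]
    calc (⨅ i, hA.eigenvalues i) = ∑ j, (⨅ i, hA.eigenvalues i) * (y j)^2 := by
          rw [← Finset.mul_sum, hnrm, mul_one]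
      _ ≤ ∑ j, hA.eigenvalues j * (y j)^2 := by
          apply Finset.sum_le_sum
          intro j _
          exact mul_le_mul_of_nonneg_right (ciInf_le (Set.Finite.bddBelow (Set.finite_range _)) j) (sq_nonneg _)
  · rw [hrep]
    calc ∑ j, hA.eigenvalues j * (y j)^2 ≤ ∑ j, (⨆ i, hA.eigenvalues i) * (y j)^2 := by
          apply Finset.sum_le_sum
          intro j _
          exact mul_le_mul_of_nonneg_right (le_ciSup (Set.Finite.bddAbove (Set.finite_range _)) j) (sq_nonneg _)
      _ = ⨆ i, hA.eigenvalues i := by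
          rw [← Finset.mul_sum, hnrm, mul_one]

theorem stmt11 {n : ℕ} (A : Matrix (Fin n) (Fin n) ℝ) (hA : A.IsHermitian)
    (γ β ρ : ℝ) (hγ : 0 < γ)
    (hρ : ρ = (⨆ i, hA.eigenvalues i) - (⨅ i, hA.eigenvalues i))
    (hβ : 2 * (1 + γ) * ρ * n ≤ β)
    (z : Fin n → ℝ) (hz : ∑ k, z k ^ 2 = 1)
    (hzR : ∀ k, |z k ^ 2 - 1 / (n : ℝ)| ≤ 1 / (2 * (n : ℝ)))
    (v : Fin n → ℝ) (hv : ∑ k, v k ^ 2 = 1) (hvz : ∑ k, v k * z k = 0) :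
    γ * ρ ≤ v ⬝ᵥ A.mulVec v - z ⬝ᵥ A.mulVec z
      + 6 * β * ∑ k, z k ^ 2 * v k ^ 2 - 2 * β * ∑ k, z k ^ 4 := by
  rcases Nat.eq_zero_or_pos n with h0 | hn
  · subst h0; simp at hz
  have : NeZero n := ⟨hn.ne'⟩
  have hnpos : (0:ℝ) < n := by exact_mod_cast hn
  obtain ⟨hv1, hv2⟩ := quad_bounds' A hA v hv
  obtain ⟨hz1, hz2⟩ := quad_bounds' A hA z hz
  have i0 : Fin n := ⟨0, hn⟩
  have hρ0 : 0 ≤ ρ := by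
    rw [hρ]
    have h1 := ciInf_le (Set.Finite.bddBelow (Set.finite_range hA.eigenvalues)) i0
    have h2 := le_ciSup (Set.Finite.bddAbove (Set.finite_range hA.eigenvalues)) i0
    linarith
  have hβ0 : 0 ≤ β := le_trans (by positivity) hβ
  have h1 : -ρ ≤ v ⬝ᵥ A.mulVec v - z ⬝ᵥ A.mulVec z := by rw [hρ]; linarith
  -- lower bound on ∑ z² v²
  have hS1 : 1/(2*(n:ℝ)) ≤ ∑ k, z k ^ 2 * v k ^ 2 := by
    calc 1/(2*(n:ℝ)) = ∑ k, 1/(2*(n:ℝ)) * v k ^ 2 := by rw [← Finset.mul_sum, hv, mul_one]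
      _ ≤ ∑ k, z k ^ 2 * v k ^ 2 := by
          apply Finset.sum_le_sum
          intro k _
          have := abs_le.1 (hzR k)
          have hk : 1/(2*(n:ℝ)) ≤ z k ^ 2 := by
            have : 1/(n:ℝ) - 1/(2*(n:ℝ)) = 1/(2*(n:ℝ)) := by field_simp; ring
            linarith [this ▸ (by linarith [(abs_le.1 (hzR k)).1] : 1/(n:ℝ) - 1/(2*(n:ℝ)) ≤ z k ^ 2)]
          exact mul_le_mul_of_nonneg_right hk (sq_nonneg _)
  -- upper bound on ∑ z⁴
  have hδ : ∑ k, (z k ^ 2 - 1/(n:ℝ)) = 0 := by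
    rw [Finset.sum_sub_distrib, hz, Finset.sum_const, Finset.card_fin]
    rw [nsmul_eq_mul, mul_one_div_cancel hnpos.ne', sub_self]
  have hS2 : ∑ k, z k ^ 4 ≤ 1/(n:ℝ) + 1/(4*(n:ℝ)) := by
    have heq : ∑ k, z k ^ 4 = ∑ k, ((1/(n:ℝ))^2 + 2*(1/(n:ℝ))*(z k ^2 - 1/(n:ℝ)) + (z k ^2 - 1/(n:ℝ))^2) := by
      apply Finset.sum_congr rfl
      intro k _
      ring
    rw [heq, Finset.sum_add_distrib, Finset.sum_add_distrib, ← Finset.mul_sum, hδ, mul_zero,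
      Finset.sum_const, Finset.card_fin]
    have hsq : ∑ k, (z k ^2 - 1/(n:ℝ))^2 ≤ ∑ k : Fin n, (1/(2*(n:ℝ)))^2 := by
      apply Finset.sum_le_sum
      intro k _
      rw [← sq_abs]
      exact pow_le_pow_left₀ (abs_nonneg _) (hzR k) 2
    rw [Finset.sum_const, Finset.card_fin] at hsq
    simp only [nsmul_eq_mul] at hsq ⊢
    have e1 : (n:ℝ) * (1/(n:ℝ))^2 = 1/(n:ℝ) := by field_simp
    have e2 : (n:ℝ) * (1/(2*(n:ℝ)))^2 = 1/(4*(n:ℝ)) := by field_simp; ring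
    linarith
  have hkey : (1+γ)*ρ ≤ β/(2*(n:ℝ)) := by
    rw [le_div_iff₀ (by positivity)]
    nlinarith
  have h6 : β/(2*(n:ℝ)) ≤ 6*β*(∑ k, z k ^ 2 * v k ^ 2) - 2*β*(∑ k, z k ^ 4) := by
    have a1 := mul_le_mul_of_nonneg_left hS1 hβ0
    have a2 := mul_le_mul_of_nonneg_left hS2 hβ0
    have : β/(2*(n:ℝ)) = 6*(β*(1/(2*(n:ℝ)))) - 2*(β*(1/(n:ℝ) + 1/(4*(n:ℝ)))) := by
      field_simp
      ring
    rw [this]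
    linarith
  linarith
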